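/- Let G = (V,E) be a finite connected simple graph and s ∈ V. Root the layering graph H at the class {s} of layer 0; for each layering class C of layer i ≥ 1 let parent(C) be the unique layering class of layer i−1 adjacent to C in H, and define the bag of C to be C ∪ parent(C), with the bag of {s} being {s}. Then the tree H together with these bags is a tree decomposition of G. -/

import Mathlib

open SimpleGraph

/-- A tree decomposition of a graph `G`, with decomposition tree indexed by `ι`. -/
structure TreeDecomp {V : Type} (G : SimpleGraph V) (ι : Type) : Type where
  /-- the decomposition tree -/
  tree : SimpleGraph ι
  /-- the decomposition tree is a tree -/
  isTree : tree.IsTree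
  /-- the bags -/
  bag : ι → Set V
  /-- every vertex of `G` belongs to some bag -/
  bag_cover : ∀ v : V, ∃ t, v ∈ bag t
  /-- both endpoints of every edge of `G` lie in a common bag -/
  bag_edge : ∀ ⦃u v : V⦄, G.Adj u v → ∃ t, u ∈ bag t ∧ v ∈ bag t
  /-- the nodes whose bag contains a given vertex induce a connected subtree -/
  bag_conn : ∀ v : V, (tree.induce {t | v ∈ bag t}).Connected

/-- `u` and `v` are layering-equivalent w.r.t. source `s`: they lie at the same
distance `i` from `s` and are joined by a path all of whose (intermediate)
vertices are at distance at least `i` from `s`. -/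
def LayerEquiv {V : Type} (G : SimpleGraph V) (s u v : V) : Prop :=
  G.dist s u = G.dist s v ∧
    ∃ p : G.Walk u v, p.IsPath ∧ ∀ w ∈ p.support, G.dist s u ≤ G.dist s w

/-- The layering class of the vertex `v` w.r.t. source `s`. -/
def layeringClassOf {V : Type} (G : SimpleGraph V) (s v : V) : Set V :=
  {u | LayerEquiv G s v u}

/-- `C` is a layering class of `G` w.r.t. source `s`. -/
def IsLayeringClass {V : Type} (G : SimpleGraph V) (s : V) (C : Set V) : Prop :=
  ∃ v, C = layeringClassOf G s v

/-- The layering graph `H`: vertices are the layering classes, two distinct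
classes being adjacent iff `G` has an edge with one endpoint in each. -/
def layeringGraph {V : Type} (G : SimpleGraph V) (s : V) :
    SimpleGraph {C : Set V // IsLayeringClass G s C} where
  Adj C D := C ≠ D ∧ ∃ u ∈ C.1, ∃ w ∈ D.1, G.Adj u w
  symm := by
    constructor
    rintro C D ⟨hne, u, hu, w, hw, h⟩
    exact ⟨hne.symm, w, hw, u, hu, h.symm⟩
  loopless := by constructor; rintro C ⟨hne, -⟩; exact hne rfl



open SimpleGraph

section LTDaux

variable {V : Type} {G : SimpleGraph V} {s u v : V}

lemma LTD_refl : LayerEquiv G s v v :=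
  ⟨rfl, Walk.nil, by simp, by simp⟩

lemma LTD_symm (h : LayerEquiv G s u v) : LayerEquiv G s v u := by
  obtain ⟨hd, p, hp, hsup⟩ := h
  refine ⟨hd.symm, p.reverse, hp.reverse, fun w hw => ?_⟩
  rw [← hd]
  exact hsup w (by simpa [Walk.support_reverse] using hw)

lemma LTD_trans {x : V} (h1 : LayerEquiv G s u v) (h2 : LayerEquiv G s v x) :
    LayerEquiv G s u x := by
  classical
  obtain ⟨hd1, p, hp, hsup1⟩ := h1
  obtain ⟨hd2, q, hq, hsup2⟩ := h2
  refine ⟨hd1.trans hd2, (p.append q).bypass, Walk.bypass_isPath _, fun w hw => ?_⟩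
  have hw' := Walk.support_bypass_subset _ hw
  rw [Walk.mem_support_append_iff] at hw'
  rcases hw' with h | h
  · exact hsup1 w h
  · rw [hd1]; exact hsup2 w h

lemma LTD_mem_self : v ∈ layeringClassOf G s v := LTD_refl

lemma LTD_classOf_eq (h : LayerEquiv G s u v) :
    layeringClassOf G s u = layeringClassOf G s v :=
  Set.ext fun x => ⟨fun hx => LTD_trans (LTD_symm h) hx, fun hx => LTD_trans h hx⟩

lemma LTD_classOf_eq_of_mem (h : u ∈ layeringClassOf G s v) :
    layeringClassOf G s v = layeringClassOf G s u := LTD_classOf_eq h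

lemma LTD_dist_eq_of_mem (h : u ∈ layeringClassOf G s v) :
    G.dist s u = G.dist s v := h.1.symm

lemma LTD_layerEquiv_of_adj (h : G.Adj u v) (hd : G.dist s u = G.dist s v) :
    LayerEquiv G s u v := by
  refine ⟨hd, Walk.cons h Walk.nil, by simp [h.ne], fun w hw => ?_⟩
  simp only [Walk.support_cons, Walk.support_nil, List.mem_cons, List.mem_singleton,
    List.not_mem_nil, or_false] at hw
  rcases hw with rfl | rfl
  · exact le_refl _
  · rw [hd]

lemma LTD_dist_adj (hG : G.Connected) (h : G.Adj u v) :
    G.dist s v ≤ G.dist s u + 1 := by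
  calc G.dist s v ≤ G.dist s u + G.dist u v := hG.dist_triangle
    _ ≤ G.dist s u + 1 := by
        have h1 : G.dist u v ≤ (Walk.cons h Walk.nil).length := SimpleGraph.dist_le _
        simp only [Walk.length_cons, Walk.length_nil, Nat.zero_add] at h1
        omega

lemma LTD_parent_equiv {u u' w w' : V} (huu' : LayerEquiv G s u u')
    (hwu : G.Adj w u) (hw'u' : G.Adj w' u')
    (hd : G.dist s w + 1 = G.dist s u) (hd' : G.dist s w' + 1 = G.dist s u') :
    LayerEquiv G s w w' := by
  classical
  obtain ⟨hdist, p, hp, hsup⟩ := huu'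
  refine ⟨by omega, (Walk.cons hwu (p.append (Walk.cons hw'u'.symm Walk.nil))).bypass,
    Walk.bypass_isPath _, fun x hx => ?_⟩
  have hx' := Walk.support_bypass_subset _ hx
  rw [Walk.support_cons, List.mem_cons] at hx'
  rcases hx' with rfl | hx'
  · exact le_refl _
  · rw [Walk.mem_support_append_iff] at hx'
    rcases hx' with h | h
    · have := hsup x h; omega
    · simp only [Walk.support_cons, Walk.support_nil, List.mem_cons, List.mem_singleton,
        List.not_mem_nil, or_false] at h
      rcases h with rfl | rfl
      · omega
      · omega

variable (G s) in
/-- The layer (distance from `s`) of a layering class. -/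
noncomputable def LTDlayer (C : {C : Set V // IsLayeringClass G s C}) : ℕ :=
  G.dist s C.2.choose

lemma LTD_layer_eq {C : {C : Set V // IsLayeringClass G s C}} (h : u ∈ C.1) :
    G.dist s u = LTDlayer G s C := by
  have hspec := C.2.choose_spec
  rw [hspec] at h
  exact LTD_dist_eq_of_mem h

lemma LTD_class_nonempty (C : {C : Set V // IsLayeringClass G s C}) : ∃ x, x ∈ C.1 := by
  obtain ⟨x, hx⟩ := C.2
  exact ⟨x, hx ▸ LTD_mem_self⟩

lemma LTD_class_eq_classOf {C : {C : Set V // IsLayeringClass G s C}} (h : u ∈ C.1) :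
    C.1 = layeringClassOf G s u := by
  obtain ⟨x, hx⟩ := C.2
  rw [hx] at h ⊢
  exact LTD_classOf_eq_of_mem h

lemma LTD_class_eq_of_mem_mem {C D : {C : Set V // IsLayeringClass G s C}}
    (h1 : u ∈ C.1) (h2 : u ∈ D.1) : C = D :=
  Subtype.ext ((LTD_class_eq_classOf h1).trans (LTD_class_eq_classOf h2).symm)

lemma LTD_adj_layer (hG : G.Connected) {C D : {C : Set V // IsLayeringClass G s C}}
    (h : (layeringGraph G s).Adj C D) :
    LTDlayer G s D + 1 = LTDlayer G s C ∨ LTDlayer G s C + 1 = LTDlayer G s D := by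
  obtain ⟨hne, a, ha, b, hb, hab⟩ := h
  have h1 : G.dist s b ≤ G.dist s a + 1 := LTD_dist_adj hG hab
  have h2 : G.dist s a ≤ G.dist s b + 1 := LTD_dist_adj hG hab.symm
  have hda := LTD_layer_eq ha
  have hdb := LTD_layer_eq hb
  by_cases heq : G.dist s a = G.dist s b
  · exfalso
    apply hne
    have hb' : b ∈ layeringClassOf G s a := LTD_layerEquiv_of_adj hab heq
    exact LTD_class_eq_of_mem_mem (by rw [LTD_class_eq_classOf ha]; exact hb') hb
  · omega

lemma LTD_parent_unique {C D D' : {C : Set V // IsLayeringClass G s C}}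
    (h1 : (layeringGraph G s).Adj C D) (h2 : (layeringGraph G s).Adj C D')
    (hD : LTDlayer G s D + 1 = LTDlayer G s C)
    (hD' : LTDlayer G s D' + 1 = LTDlayer G s C) : D = D' := by
  obtain ⟨_, a, ha, b, hb, hab⟩ := h1
  obtain ⟨_, a', ha', b', hb', ha'b'⟩ := h2
  have haa' : LayerEquiv G s a a' := by
    have : a' ∈ layeringClassOf G s a := by rw [← LTD_class_eq_classOf ha]; exact ha'
    exact this
  have key : LayerEquiv G s b b' := by
    refine LTD_parent_equiv haa' hab.symm ha'b'.symm ?_ ?_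
    · rw [LTD_layer_eq hb, LTD_layer_eq ha]; exact hD
    · rw [LTD_layer_eq hb', LTD_layer_eq ha']; exact hD'
  refine Subtype.ext ?_
  rw [LTD_class_eq_classOf hb, LTD_class_eq_classOf hb']
  exact LTD_classOf_eq key

end LTDaux

section LTDacyclic

variable {V : Type} {G : SimpleGraph V} {s : V}

lemma LTD_no_max_cycle (hG : G.Connected) (M : {C : Set V // IsLayeringClass G s C})
    (c : (layeringGraph G s).Walk M M) (hc : c.IsCycle)
    (hmax : ∀ x ∈ c.support, LTDlayer G s x ≤ LTDlayer G s M) : False := by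
  cases c with
  | nil => exact hc.ne_nil rfl
  | @cons _ b _ h p =>
    obtain ⟨a, h', q, hq⟩ := Walk.exists_eq_cons_of_ne h.ne p.reverse
    have hb_sup : b ∈ (Walk.cons h p).support := by
      simp [Walk.support_cons, p.start_mem_support]
    have ha_sup : a ∈ (Walk.cons h p).support := by
      have h1 : a ∈ p.reverse.support := by
        rw [hq]; simp [Walk.support_cons, q.start_mem_support]
      rw [Walk.support_reverse, List.mem_reverse] at h1
      simp [Walk.support_cons, h1]
    have hb_le := hmax b hb_sup
    have ha_le := hmax a ha_sup
    have hb1 : LTDlayer G s b + 1 = LTDlayer G s M := by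
      rcases LTD_adj_layer hG h with h1 | h1 <;> omega
    have ha1 : LTDlayer G s a + 1 = LTDlayer G s M := by
      rcases LTD_adj_layer hG h' with h1 | h1 <;> omega
    have hne : b ≠ a := by
      rintro rfl
      have hnodup : ((Walk.cons h p).edges).Nodup := hc.edges_nodup
      rw [Walk.edges_cons] at hnodup
      have hmem : s(M, b) ∈ p.edges := by
        have h2 : s(M, b) ∈ p.reverse.edges := by
          rw [hq, Walk.edges_cons]; exact List.mem_cons_self
        rwa [Walk.edges_reverse, List.mem_reverse] at h2
      exact (List.nodup_cons.mp hnodup).1 hmem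
    exact hne (LTD_parent_unique h h' hb1 ha1)

lemma LTD_acyclic (hG : G.Connected) : (layeringGraph G s).IsAcyclic := by
  classical
  intro C c hc
  obtain ⟨M, hM, hmax⟩ := c.support.toFinset.exists_max_image (LTDlayer G s)
    (by simp [c.support_ne_nil, List.toFinset_eq_empty_iff, ← Finset.nonempty_iff_ne_empty])
  rw [List.mem_toFinset] at hM
  refine LTD_no_max_cycle hG M (c.rotate M hM) (hc.rotate hM) fun x hx => ?_
  apply hmax
  rw [List.mem_toFinset]
  -- membership in rotated support implies membership in original support
  rcases List.mem_cons.mp ((c.rotate M hM).support_eq_cons ▸ hx) with rfl | hx'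
  · exact hM
  · have := (Walk.support_rotate c M hM).mem_iff.mp hx'
    exact List.mem_of_mem_tail this

/-- Root the layering graph `H` at the class `{s}` of layer `0`;
for each layering class `C` of layer `i ≥ 1` let `P C` be the (unique) layering
class of layer `i − 1` adjacent to `C` in `H`, and define the bag of `C` to be
`C ∪ P C`, with the bag of `{s}` being `{s}`. Then the tree `H` together with
these bags is a tree decomposition of `G`. -/
theorem layering_tree_decomposition {V : Type} [Fintype V]
    (G : SimpleGraph V) (hG : G.Connected) (s : V)
    (P : {C : Set V // IsLayeringClass G s C} → {C : Set V // IsLayeringClass G s C})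
    (hP : ∀ C, s ∉ C.1 → (layeringGraph G s).Adj C (P C) ∧
      ∀ v ∈ C.1, ∀ w ∈ (P C).1, G.dist s w + 1 = G.dist s v)
    (B : {C : Set V // IsLayeringClass G s C} → Set V)
    (hBroot : ∀ C, s ∈ C.1 → B C = {s})
    (hBne : ∀ C, s ∉ C.1 → B C = C.1 ∪ (P C).1) :
    ∃ td : TreeDecomp G {C : Set V // IsLayeringClass G s C},
      td.tree = layeringGraph G s ∧ td.bag = B := by
  classical
  -- connectivity of the layering graph
  have hreach : ∀ n (C : {C : Set V // IsLayeringClass G s C}), LTDlayer G s C = n →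
      (layeringGraph G s).Reachable C ⟨layeringClassOf G s s, s, rfl⟩ := by
    intro n
    induction n using Nat.strong_induction_on with
    | _ n ih =>
      intro C hC
      by_cases hs : s ∈ C.1
      · have : C = ⟨layeringClassOf G s s, s, rfl⟩ := Subtype.ext (LTD_class_eq_classOf hs)
        rw [this]
      · obtain ⟨hadj, hlay⟩ := hP C hs
        obtain ⟨w, hw⟩ := LTD_class_nonempty (P C)
        obtain ⟨x, hx⟩ := LTD_class_nonempty C
        have h1 : G.dist s w + 1 = G.dist s x := hlay x hx w hw
        have h2 : LTDlayer G s (P C) + 1 = LTDlayer G s C := by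
          rw [← LTD_layer_eq hw, ← LTD_layer_eq hx]; exact h1
        exact (hadj.reachable).trans (ih (LTDlayer G s (P C)) (by omega) _ rfl)
  have hconn : (layeringGraph G s).Connected := by
    rw [connected_iff]
    exact ⟨fun C D => (hreach _ C rfl).trans (hreach _ D rfl).symm,
      ⟨⟨layeringClassOf G s s, s, rfl⟩⟩⟩
  -- basic fact: s in the class of v forces v = s
  have hsv_eq : ∀ v : V, s ∈ layeringClassOf G s v → v = s := by
    intro v hv
    have h0 : G.dist s v = 0 := by
      rw [hv.1]; exact SimpleGraph.dist_self
    exact ((hG.dist_eq_zero_iff).mp h0).symm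
  -- bag cover
  have hmemB : ∀ v : V, v ∈ B ⟨layeringClassOf G s v, v, rfl⟩ := by
    intro v
    by_cases hs : s ∈ (⟨layeringClassOf G s v, v, rfl⟩ :
        {C : Set V // IsLayeringClass G s C}).1
    · rw [hBroot _ hs]
      have := hsv_eq v hs
      simp [this]
    · rw [hBne _ hs]
      exact Or.inl LTD_mem_self
  -- bag edge, directed case
  have hedge1 : ∀ u v : V, G.Adj u v → G.dist s v = G.dist s u + 1 →
      ∃ t, u ∈ B t ∧ v ∈ B t := by
    intro u v huv hd
    have hsC : s ∉ (⟨layeringClassOf G s v, v, rfl⟩ :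
        {C : Set V // IsLayeringClass G s C}).1 := by
      intro hs
      have hv := hsv_eq v hs
      rw [hv, SimpleGraph.dist_self] at hd
      omega
    obtain ⟨hadj, hlay⟩ := hP ⟨layeringClassOf G s v, v, rfl⟩ hsC
    obtain ⟨hne, a, ha, b, hb, hab⟩ := hadj
    have hd' : G.dist s b + 1 = G.dist s a := hlay a ha b hb
    have key : LayerEquiv G s u b :=
      LTD_parent_equiv (ha : LayerEquiv G s v a) huv hab.symm (by omega) hd'
    have hub : u ∈ (P ⟨layeringClassOf G s v, v, rfl⟩).1 := by
      rw [LTD_class_eq_classOf hb]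
      exact LTD_symm key
    exact ⟨⟨layeringClassOf G s v, v, rfl⟩,
      by rw [hBne _ hsC]; exact Or.inr hub,
      by rw [hBne _ hsC]; exact Or.inl LTD_mem_self⟩
  -- bag edge
  have hedge : ∀ ⦃u v : V⦄, G.Adj u v → ∃ t, u ∈ B t ∧ v ∈ B t := by
    intro u v huv
    have h1 : G.dist s v ≤ G.dist s u + 1 := LTD_dist_adj hG huv
    have h2 : G.dist s u ≤ G.dist s v + 1 := LTD_dist_adj hG huv.symm
    rcases Nat.lt_trichotomy (G.dist s u) (G.dist s v) with hlt | heq | hgt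
    · exact hedge1 u v huv (by omega)
    · have hmem : v ∈ layeringClassOf G s u := LTD_layerEquiv_of_adj huv heq
      have hsC : s ∉ (⟨layeringClassOf G s u, u, rfl⟩ :
          {C : Set V // IsLayeringClass G s C}).1 := by
        intro hs
        have hu := hsv_eq u hs
        have h0 : G.dist s v = 0 := by rw [← heq, hu, SimpleGraph.dist_self]
        have hv := ((hG.dist_eq_zero_iff).mp h0).symm
        exact huv.ne (hu.trans hv.symm)
      exact ⟨⟨layeringClassOf G s u, u, rfl⟩,
        by rw [hBne _ hsC]; exact Or.inl LTD_mem_self,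
        by rw [hBne _ hsC]; exact Or.inl hmem⟩
    · obtain ⟨t, h1', h2'⟩ := hedge1 v u huv.symm (by omega)
      exact ⟨t, h2', h1'⟩
  -- bag connectivity
  have hconn2 : ∀ v : V, ((layeringGraph G s).induce {t | v ∈ B t}).Connected := by
    intro v
    have key : ∀ D, v ∈ B D →
        D = (⟨layeringClassOf G s v, v, rfl⟩ : {C : Set V // IsLayeringClass G s C}) ∨
        (layeringGraph G s).Adj D ⟨layeringClassOf G s v, v, rfl⟩ := by
      intro D hD
      by_cases hs : s ∈ D.1
      · rw [hBroot _ hs] at hD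
        have hv : v = s := hD
        left
        exact Subtype.ext ((LTD_class_eq_classOf hs).trans (by rw [hv]))
      · rw [hBne _ hs] at hD
        rcases hD with h | h
        · exact Or.inl (Subtype.ext (LTD_class_eq_classOf h))
        · have hPD : P D = ⟨layeringClassOf G s v, v, rfl⟩ :=
            Subtype.ext (LTD_class_eq_classOf h)
          exact Or.inr (hPD ▸ (hP D hs).1)
    have hhub : (⟨layeringClassOf G s v, v, rfl⟩ : {C : Set V // IsLayeringClass G s C}) ∈
        {t | v ∈ B t} := hmemB v
    have hstep : ∀ z : {t // t ∈ {t : {C : Set V // IsLayeringClass G s C} | v ∈ B t}},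
        ((layeringGraph G s).induce {t | v ∈ B t}).Reachable z
          ⟨⟨layeringClassOf G s v, v, rfl⟩, hhub⟩ := by
      intro z
      rcases key z.1 z.2 with h | h
      · have hz : z = ⟨⟨layeringClassOf G s v, v, rfl⟩, hhub⟩ := Subtype.ext h
        rw [hz]
      · exact SimpleGraph.Adj.reachable h
    rw [connected_iff]
    exact ⟨fun x y => (hstep x).trans (hstep y).symm,
      ⟨⟨⟨layeringClassOf G s v, v, rfl⟩, hhub⟩⟩⟩
  exact ⟨⟨layeringGraph G s, ⟨hconn, LTD_acyclic hG⟩, B,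
    fun v => ⟨⟨layeringClassOf G s v, v, rfl⟩, hmemB v⟩, hedge, hconn2⟩, rfl, rfl⟩
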